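/- arXiv:1602.05560 — 2 statements merged into one kernel-verified Lean document; each statement's English description precedes it below -/
import Mathlib

section
/- Let Ω be a finite set, Z a random element of Ω, and 𝔲₁, 𝔲₂ : Ω → ℕ with 𝔲₁ ≤ v₁ and 𝔲₂ ≤ v₂ everywhere; set U := 𝔲₁(Z) + 𝔲₂(Z), let P_{(l,k)} denote the law of Z given 𝔲₁(Z) = l, 𝔲₂(Z) = k, let P_{(u)} denote the law of Z given U = u, and write p(l|u) := P(𝔲₁(Z) = l | U = u). Let 𝓡₁, 𝓡₂ be Markov kernels on Ω such that whenever Z ∼ P_{(l,k)} with l + k = u < v₁ + v₂: if l < v₁ then 𝓡₁(Z) ∼ P_{(l+1,k)}, and if k < v₂ then 𝓡₂(Z) ∼ P_{(l,k+1)}. Let r₁, r₂ be functions of (l, k) with r₁(l,k) + r₂(l,k) = 1, r₁(v₁,k) = 0, r₂(l,v₂) = 0, satisfying for all u = 0, …, v₁+v₂−1: r₁(l−1, u−l+1) p(l−1|u) + r₂(l, u−l) p(l|u) = p(l|u+1) for (u−v₂)∨0 < l ≤ u∧v₁; r₂(0, u) p(0|u) = p(0|u+1) when u < v₂; and r₁(u,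 0) p(u|u) = p(u+1|u+1) when u < v₁. Define the combined kernel 𝓡 that, at z, applies 𝓡₁ with probability r₁(𝔲₁(z), 𝔲₂(z)) and 𝓡₂ with probability r₂(𝔲₁(z), 𝔲₂(z)). Then for every u < v₁ + v₂ with P(U = u) > 0: if Z ∼ P_{(u)} then 𝓡(Z) ∼ P_{(u+1)}. -/
open Finset

noncomputable section

open Classical in
/-- Probability of an event under a pmf on a finite type. -/
def prOf {Ω : Type*} [Fintype Ω] (P : Ω → ℝ) (E : Ω → Prop) : ℝ :=
  ∑ z, if E z then P z else 0

open Classical in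
/-- The conditional law `P_{(l,k)}` of `Z` given `𝔲₁(Z) = l` and `𝔲₂(Z) = k`. -/
def condLK {Ω : Type*} [Fintype Ω] (P : Ω → ℝ) (𝔲₁ 𝔲₂ : Ω → ℕ) (l k : ℕ) (z : Ω) : ℝ :=
  (if 𝔲₁ z = l ∧ 𝔲₂ z = k then P z else 0) /
    prOf P (fun w => 𝔲₁ w = l ∧ 𝔲₂ w = k)

open Classical in
/-- The conditional law `P_{(u)}` of `Z` given `𝔲₁(Z) + 𝔲₂(Z) = u`. -/
def condU {Ω : Type*} [Fintype Ω] (P : Ω → ℝ) (𝔲₁ 𝔲₂ : Ω → ℕ) (u : ℕ) (z : Ω) : ℝ :=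
  (if 𝔲₁ z + 𝔲₂ z = u then P z else 0) / prOf P (fun w => 𝔲₁ w + 𝔲₂ w = u)

open Classical in
/-- `p(l|u) = P(𝔲₁(Z) = l | 𝔲₁(Z) + 𝔲₂(Z) = u)`. -/
def pLU {Ω : Type*} [Fintype Ω] (P : Ω → ℝ) (𝔲₁ 𝔲₂ : Ω → ℕ) (l u : ℕ) : ℝ :=
  prOf P (fun w => 𝔲₁ w = l ∧ 𝔲₁ w + 𝔲₂ w = u) / prOf P (fun w => 𝔲₁ w + 𝔲₂ w = u)

section Aux

variable {Ω : Type*} [Fintype Ω]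

lemma prOf_nonneg (P : Ω → ℝ) (hP : ∀ z, 0 ≤ P z) (E : Ω → Prop) : 0 ≤ prOf P E := by
  unfold prOf
  apply Finset.sum_nonneg
  intro z _
  split
  · exact hP z
  · exact le_refl 0

lemma prOf_congr (P : Ω → ℝ) {E E' : Ω → Prop} (h : ∀ w, E w ↔ E' w) :
    prOf P E = prOf P E' := by
  unfold prOf
  refine Finset.sum_congr rfl fun z _ => ?_
  by_cases hz : E z
  · rw [if_pos hz, if_pos ((h z).mp hz)]
  · rw [if_neg hz, if_neg (fun hz' => hz ((h z).mpr hz'))]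

lemma prOf_zero_of_empty (P : Ω → ℝ) {E : Ω → Prop} (h : ∀ w, ¬ E w) : prOf P E = 0 := by
  unfold prOf
  exact Finset.sum_eq_zero fun z _ => if_neg (h z)

lemma eq_zero_of_prOf_eq_zero (P : Ω → ℝ) (hP : ∀ z, 0 ≤ P z) {E : Ω → Prop}
    (h : prOf P E = 0) {z : Ω} (hz : E z) : P z = 0 := by
  unfold prOf at h
  have hterm := (Finset.sum_eq_zero_iff_of_nonneg (fun w _ => by
      by_cases hw : E w
      · rw [if_pos hw]; exact hP w
      · rw [if_neg hw])).mp h z (Finset.mem_univ z)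
  rwa [if_pos hz] at hterm

lemma pLU_eq_zero (P : Ω → ℝ) (𝔲₁ 𝔲₂ : Ω → ℕ) (j w : ℕ)
    (h : ∀ w', ¬ (𝔲₁ w' = j ∧ 𝔲₁ w' + 𝔲₂ w' = w)) : pLU P 𝔲₁ 𝔲₂ j w = 0 := by
  unfold pLU
  rw [prOf_zero_of_empty P h, zero_div]

lemma condLK_mul_apply (P : Ω → ℝ) (𝔲₁ 𝔲₂ : Ω → ℕ) (l k : ℕ) (z : Ω) (f : ℕ → ℕ → ℝ) :
    condLK P 𝔲₁ 𝔲₂ l k z * f (𝔲₁ z) (𝔲₂ z) = condLK P 𝔲₁ 𝔲₂ l k z * f l k := by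
  unfold condLK
  by_cases h : 𝔲₁ z = l ∧ 𝔲₂ z = k
  · rw [h.1, h.2]
  · rw [if_neg h, zero_div, zero_mul, zero_mul]

lemma condU_decompose (P : Ω → ℝ) (hP : ∀ z, 0 ≤ P z) (𝔲₁ 𝔲₂ : Ω → ℕ) (u : ℕ) (z : Ω) :
    condU P 𝔲₁ 𝔲₂ u z
      = ∑ m ∈ Finset.range (u + 1), pLU P 𝔲₁ 𝔲₂ m u * condLK P 𝔲₁ 𝔲₂ m (u - m) z := by
  by_cases hz : 𝔲₁ z + 𝔲₂ z = u
  · rw [Finset.sum_eq_single (𝔲₁ z)]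
    · have h2 : 𝔲₂ z = u - 𝔲₁ z := by omega
      have hev : prOf P (fun w => 𝔲₁ w = 𝔲₁ z ∧ 𝔲₁ w + 𝔲₂ w = u)
          = prOf P (fun w => 𝔲₁ w = 𝔲₁ z ∧ 𝔲₂ w = u - 𝔲₁ z) := by
        apply prOf_congr
        intro w
        constructor <;> rintro ⟨ha, hb⟩ <;> exact ⟨ha, by omega⟩
      unfold condU pLU condLK
      rw [hev, if_pos hz, if_pos ⟨rfl, h2⟩]
      rcases (prOf_nonneg P hP (fun w => 𝔲₁ w = 𝔲₁ z ∧ 𝔲₂ w = u - 𝔲₁ z)).eq_or_lt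
        with hA | hA
      · have hPz : P z = 0 := eq_zero_of_prOf_eq_zero P hP hA.symm ⟨rfl, h2⟩
        rw [hPz, zero_div, zero_div, mul_zero]
      · have hAne : prOf P (fun w => 𝔲₁ w = 𝔲₁ z ∧ 𝔲₂ w = u - 𝔲₁ z) ≠ 0 := ne_of_gt hA
        rw [div_mul_div_comm, mul_comm
          (prOf P fun w => 𝔲₁ w = 𝔲₁ z ∧ 𝔲₂ w = u - 𝔲₁ z) (P z),
          mul_div_mul_right _ _ hAne]
    · intro m _ hne
      have hc : condLK P 𝔲₁ 𝔲₂ m (u - m) z = 0 := by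
        unfold condLK
        rw [if_neg fun hc => hne hc.1.symm, zero_div]
      rw [hc, mul_zero]
    · intro hmem
      exact absurd (Finset.mem_range.mpr (by omega)) hmem
  · unfold condU
    rw [if_neg hz, zero_div]
    symm
    apply Finset.sum_eq_zero
    intro m hm
    have hmu : m ≤ u := Nat.lt_succ_iff.mp (Finset.mem_range.mp hm)
    have hc : condLK P 𝔲₁ 𝔲₂ m (u - m) z = 0 := by
      unfold condLK
      rw [if_neg fun hc => hz (by obtain ⟨a, b⟩ := hc; omega), zero_div]
    rw [hc, mul_zero]

end Aux

/-- combined random transformations: let `Ω` be finite, `Z` a random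
element of `Ω` with law `P`, `𝔲₁ ≤ v₁` and `𝔲₂ ≤ v₂`, `U = 𝔲₁(Z) + 𝔲₂(Z)`. Let
`𝓡₁, 𝓡₂` be Markov kernels with: whenever `Z ∼ P_{(l,k)}`, `l + k < v₁ + v₂`, if
`l < v₁` then `𝓡₁(Z) ∼ P_{(l+1,k)}` and if `k < v₂` then `𝓡₂(Z) ∼ P_{(l,k+1)}`. Let
`r₁, r₂` satisfy `r₁ + r₂ = 1`, `r₁(v₁,·) = 0`, `r₂(·,v₂) = 0` and the recursions
`r₁(l-1,u-l+1) p(l-1|u) + r₂(l,u-l) p(l|u) = p(l|u+1)` for `(u-v₂) ∨ 0 < l ≤ u ∧ v₁`,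
`r₂(0,u) p(0|u) = p(0|u+1)` when `u < v₂`, and `r₁(u,0) p(u|u) = p(u+1|u+1)` when
`u < v₁` (for all `u < v₁ + v₂`). Then the combined kernel `𝓡`, which at `z` applies
`𝓡ᵢ` with probability `rᵢ(𝔲₁ z, 𝔲₂ z)`, satisfies: for every `u < v₁ + v₂` with
`P(U = u) > 0`, if `Z ∼ P_{(u)}` then `𝓡(Z) ∼ P_{(u+1)}`. -/
theorem combined_transformation
    {Ω : Type*} [Fintype Ω]
    (P : Ω → ℝ) (hPnn : ∀ z, 0 ≤ P z) (hP1 : ∑ z, P z = 1)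
    (v₁ v₂ : ℕ) (𝔲₁ 𝔲₂ : Ω → ℕ)
    (h𝔲₁ : ∀ z, 𝔲₁ z ≤ v₁) (h𝔲₂ : ∀ z, 𝔲₂ z ≤ v₂)
    (R₁ R₂ : Ω → Ω → ℝ)
    (hR₁nn : ∀ z z', 0 ≤ R₁ z z') (hR₁1 : ∀ z, ∑ z', R₁ z z' = 1)
    (hR₂nn : ∀ z z', 0 ≤ R₂ z z') (hR₂1 : ∀ z, ∑ z', R₂ z z' = 1)
    (hker₁ : ∀ l k : ℕ, l + k < v₁ + v₂ → l < v₁ →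
      0 < prOf P (fun w => 𝔲₁ w = l ∧ 𝔲₂ w = k) →
      ∀ z', (∑ z, condLK P 𝔲₁ 𝔲₂ l k z * R₁ z z') = condLK P 𝔲₁ 𝔲₂ (l + 1) k z')
    (hker₂ : ∀ l k : ℕ, l + k < v₁ + v₂ → k < v₂ →
      0 < prOf P (fun w => 𝔲₁ w = l ∧ 𝔲₂ w = k) →
      ∀ z', (∑ z, condLK P 𝔲₁ 𝔲₂ l k z * R₂ z z') = condLK P 𝔲₁ 𝔲₂ l (k + 1) z')
    (r₁ r₂ : ℕ → ℕ → ℝ)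
    (hsum : ∀ l k, r₁ l k + r₂ l k = 1)
    (hr₁v : ∀ k, r₁ v₁ k = 0) (hr₂v : ∀ l, r₂ l v₂ = 0)
    (hmid : ∀ u : ℕ, u < v₁ + v₂ → ∀ l : ℕ, u - v₂ < l → l ≤ min u v₁ →
      r₁ (l - 1) (u - l + 1) * pLU P 𝔲₁ 𝔲₂ (l - 1) u
          + r₂ l (u - l) * pLU P 𝔲₁ 𝔲₂ l u
        = pLU P 𝔲₁ 𝔲₂ l (u + 1))
    (hlow : ∀ u : ℕ, u < v₁ + v₂ → u < v₂ →
      r₂ 0 u * pLU P 𝔲₁ 𝔲₂ 0 u = pLU P 𝔲₁ 𝔲₂ 0 (u + 1))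
    (hhigh : ∀ u : ℕ, u < v₁ + v₂ → u < v₁ →
      r₁ u 0 * pLU P 𝔲₁ 𝔲₂ u u = pLU P 𝔲₁ 𝔲₂ (u + 1) (u + 1)) :
    ∀ u : ℕ, u < v₁ + v₂ → 0 < prOf P (fun w => 𝔲₁ w + 𝔲₂ w = u) →
      ∀ z', (∑ z, condU P 𝔲₁ 𝔲₂ u z *
          (r₁ (𝔲₁ z) (𝔲₂ z) * R₁ z z' + r₂ (𝔲₁ z) (𝔲₂ z) * R₂ z z'))
        = condU P 𝔲₁ 𝔲₂ (u + 1) z' := by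
  intro u hu hB z'
  -- Step lemma: per-level contribution
  have step : ∀ m ∈ Finset.range (u + 1),
      (∑ z, pLU P 𝔲₁ 𝔲₂ m u * (condLK P 𝔲₁ 𝔲₂ m (u - m) z *
          (r₁ (𝔲₁ z) (𝔲₂ z) * R₁ z z' + r₂ (𝔲₁ z) (𝔲₂ z) * R₂ z z')))
        = pLU P 𝔲₁ 𝔲₂ m u * r₁ m (u - m) * condLK P 𝔲₁ 𝔲₂ (m + 1) (u - m) z'
          + pLU P 𝔲₁ 𝔲₂ m u * r₂ m (u - m) * condLK P 𝔲₁ 𝔲₂ m (u - m + 1) z' := by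
    intro m hm
    have hmu : m ≤ u := Nat.lt_succ_iff.mp (Finset.mem_range.mp hm)
    have hrepl : ∀ z, condLK P 𝔲₁ 𝔲₂ m (u - m) z *
        (r₁ (𝔲₁ z) (𝔲₂ z) * R₁ z z' + r₂ (𝔲₁ z) (𝔲₂ z) * R₂ z z')
        = r₁ m (u - m) * (condLK P 𝔲₁ 𝔲₂ m (u - m) z * R₁ z z')
          + r₂ m (u - m) * (condLK P 𝔲₁ 𝔲₂ m (u - m) z * R₂ z z') := by
      intro z
      rw [condLK_mul_apply P 𝔲₁ 𝔲₂ m (u - m) z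
        (fun l k => r₁ l k * R₁ z z' + r₂ l k * R₂ z z')]
      ring
    simp only [hrepl]
    rcases (prOf_nonneg P hPnn (fun w => 𝔲₁ w = m ∧ 𝔲₂ w = u - m)).eq_or_lt with hA | hA
    · have hplu : pLU P 𝔲₁ 𝔲₂ m u = 0 := by
        unfold pLU
        rw [prOf_congr P (E' := fun w => 𝔲₁ w = m ∧ 𝔲₂ w = u - m)
          (fun w => by constructor <;> rintro ⟨ha, hb⟩ <;> exact ⟨ha, by omega⟩),
          ← hA, zero_div]
      rw [hplu]
      simp
    · have hsum1 : r₁ m (u - m) * (∑ z, condLK P 𝔲₁ 𝔲₂ m (u - m) z * R₁ z z')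
          = r₁ m (u - m) * condLK P 𝔲₁ 𝔲₂ (m + 1) (u - m) z' := by
        rcases lt_or_ge m v₁ with h | h
        · rw [hker₁ m (u - m) (by omega) h hA z']
        · have hmv : m = v₁ := by
            rcases eq_or_lt_of_le h with h' | h'
            · exact h'.symm
            · exfalso
              have hz : ∀ w, ¬ (𝔲₁ w = m ∧ 𝔲₂ w = u - m) := by
                rintro w ⟨ha, hb⟩
                have := h𝔲₁ w
                omega
              rw [prOf_zero_of_empty P hz] at hA
              exact lt_irrefl 0 hA
          rw [hmv, hr₁v, zero_mul, zero_mul]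
      have hsum2 : r₂ m (u - m) * (∑ z, condLK P 𝔲₁ 𝔲₂ m (u - m) z * R₂ z z')
          = r₂ m (u - m) * condLK P 𝔲₁ 𝔲₂ m (u - m + 1) z' := by
        rcases lt_or_ge (u - m) v₂ with h | h
        · rw [hker₂ m (u - m) (by omega) h hA z']
        · have hmv : u - m = v₂ := by
            rcases eq_or_lt_of_le h with h' | h'
            · exact h'.symm
            · exfalso
              have hz : ∀ w, ¬ (𝔲₁ w = m ∧ 𝔲₂ w = u - m) := by
                rintro w ⟨ha, hb⟩
                have := h𝔲₂ w
                omega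
              rw [prOf_zero_of_empty P hz] at hA
              exact lt_irrefl 0 hA
          rw [hmv, hr₂v, zero_mul, zero_mul]
      rw [← Finset.mul_sum, Finset.sum_add_distrib, ← Finset.mul_sum, ← Finset.mul_sum,
        hsum1, hsum2]
      ring
  -- Coefficient identity
  have coef : ∀ j, j ≤ u + 1 →
      pLU P 𝔲₁ 𝔲₂ j (u + 1)
        = (if j = 0 then 0 else pLU P 𝔲₁ 𝔲₂ (j - 1) u * r₁ (j - 1) (u - (j - 1)))
          + (if j = u + 1 then 0 else pLU P 𝔲₁ 𝔲₂ j u * r₂ j (u - j)) := by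
    intro j hj
    by_cases h0 : j = 0
    · subst h0
      rw [if_pos rfl, if_neg (by omega), zero_add, Nat.sub_zero]
      rcases lt_trichotomy u v₂ with h | h | h
      · rw [mul_comm, hlow u hu h]
      · subst h
        rw [hr₂v, mul_zero]
        apply pLU_eq_zero
        rintro w ⟨ha, hb⟩
        have := h𝔲₂ w
        omega
      · rw [pLU_eq_zero P 𝔲₁ 𝔲₂ 0 (u + 1)
            (by rintro w ⟨ha, hb⟩; have := h𝔲₂ w; omega),
          pLU_eq_zero P 𝔲₁ 𝔲₂ 0 u
            (by rintro w ⟨ha, hb⟩; have := h𝔲₂ w; omega), zero_mul]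
    · by_cases h1 : j = u + 1
      · subst h1
        rw [if_neg h0, if_pos rfl, add_zero, Nat.add_sub_cancel, Nat.sub_self]
        rcases lt_trichotomy u v₁ with h | h | h
        · rw [mul_comm, hhigh u hu h]
        · subst h
          rw [hr₁v, mul_zero]
          apply pLU_eq_zero
          rintro w ⟨ha, hb⟩
          have := h𝔲₁ w
          omega
        · rw [pLU_eq_zero P 𝔲₁ 𝔲₂ (u + 1) (u + 1)
              (by rintro w ⟨ha, hb⟩; have := h𝔲₁ w; omega),
            pLU_eq_zero P 𝔲₁ 𝔲₂ u u
              (by rintro w ⟨ha, hb⟩; have := h𝔲₁ w; omega), zero_mul]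
      · rw [if_neg h0, if_neg h1]
        have hj1 : 1 ≤ j := Nat.one_le_iff_ne_zero.mpr h0
        have hju : j ≤ u := by omega
        by_cases h2 : j ≤ v₁ ∧ u - v₂ < j
        · have hm := hmid u hu j h2.2 (le_min hju h2.1)
          have e : u - (j - 1) = u - j + 1 := by omega
          rw [e]
          linear_combination -hm
        · rcases not_and_or.mp h2 with h | h
          · have hv : v₁ < j := by omega
            rw [pLU_eq_zero P 𝔲₁ 𝔲₂ j (u + 1)
                (by rintro w ⟨ha, hb⟩; have := h𝔲₁ w; omega),
              pLU_eq_zero P 𝔲₁ 𝔲₂ j u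
                (by rintro w ⟨ha, hb⟩; have := h𝔲₁ w; omega), zero_mul, add_zero]
            by_cases hv1 : v₁ < j - 1
            · rw [pLU_eq_zero P 𝔲₁ 𝔲₂ (j - 1) u
                (by rintro w ⟨ha, hb⟩; have := h𝔲₁ w; omega), zero_mul]
            · have hje : j - 1 = v₁ := by omega
              rw [hje, hr₁v, mul_zero]
          · have hle : j ≤ u - v₂ := by omega
            rw [pLU_eq_zero P 𝔲₁ 𝔲₂ j (u + 1)
                (by rintro w ⟨ha, hb⟩; have := h𝔲₂ w; omega),
              pLU_eq_zero P 𝔲₁ 𝔲₂ (j - 1) u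
                (by rintro w ⟨ha, hb⟩; have := h𝔲₂ w; omega), zero_mul, zero_add]
            by_cases hv2 : u - j = v₂
            · rw [hv2, hr₂v, mul_zero]
            · rw [pLU_eq_zero P 𝔲₁ 𝔲₂ j u
                (by rintro w ⟨ha, hb⟩; have := h𝔲₂ w; omega), zero_mul]
  -- Reassembly
  calc
    ∑ z, condU P 𝔲₁ 𝔲₂ u z * (r₁ (𝔲₁ z) (𝔲₂ z) * R₁ z z' + r₂ (𝔲₁ z) (𝔲₂ z) * R₂ z z')
        = ∑ z, ∑ m ∈ Finset.range (u + 1),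
            pLU P 𝔲₁ 𝔲₂ m u * (condLK P 𝔲₁ 𝔲₂ m (u - m) z *
              (r₁ (𝔲₁ z) (𝔲₂ z) * R₁ z z' + r₂ (𝔲₁ z) (𝔲₂ z) * R₂ z z')) := by
          refine Finset.sum_congr rfl fun z _ => ?_
          rw [condU_decompose P hPnn 𝔲₁ 𝔲₂ u z, Finset.sum_mul]
          exact Finset.sum_congr rfl fun m _ => by ring
    _ = ∑ m ∈ Finset.range (u + 1), ∑ z,
            pLU P 𝔲₁ 𝔲₂ m u * (condLK P 𝔲₁ 𝔲₂ m (u - m) z *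
              (r₁ (𝔲₁ z) (𝔲₂ z) * R₁ z z' + r₂ (𝔲₁ z) (𝔲₂ z) * R₂ z z')) :=
          Finset.sum_comm
    _ = ∑ m ∈ Finset.range (u + 1),
          (pLU P 𝔲₁ 𝔲₂ m u * r₁ m (u - m) * condLK P 𝔲₁ 𝔲₂ (m + 1) (u - m) z'
            + pLU P 𝔲₁ 𝔲₂ m u * r₂ m (u - m) * condLK P 𝔲₁ 𝔲₂ m (u - m + 1) z') :=
          Finset.sum_congr rfl step
    _ = ∑ j ∈ Finset.range (u + 2),
          pLU P 𝔲₁ 𝔲₂ j (u + 1) * condLK P 𝔲₁ 𝔲₂ j (u + 1 - j) z' := by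
          rw [Finset.sum_add_distrib]
          have e1 : ∑ m ∈ Finset.range (u + 1),
              pLU P 𝔲₁ 𝔲₂ m u * r₁ m (u - m) * condLK P 𝔲₁ 𝔲₂ (m + 1) (u - m) z'
              = ∑ j ∈ Finset.range (u + 2),
                (if j = 0 then 0 else
                  pLU P 𝔲₁ 𝔲₂ (j - 1) u * r₁ (j - 1) (u - (j - 1))
                    * condLK P 𝔲₁ 𝔲₂ j (u + 1 - j) z') := by
            conv_rhs => rw [Finset.sum_range_succ']
            simp only [Nat.succ_ne_zero, if_false, Nat.add_sub_cancel,
              Nat.add_sub_add_right, eq_self_iff_true, if_true, add_zero]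
          have e2 : ∑ m ∈ Finset.range (u + 1),
              pLU P 𝔲₁ 𝔲₂ m u * r₂ m (u - m) * condLK P 𝔲₁ 𝔲₂ m (u - m + 1) z'
              = ∑ j ∈ Finset.range (u + 2),
                (if j = u + 1 then 0 else
                  pLU P 𝔲₁ 𝔲₂ j u * r₂ j (u - j) * condLK P 𝔲₁ 𝔲₂ j (u + 1 - j) z') := by
            conv_rhs => rw [Finset.sum_range_succ]
            rw [if_pos rfl, add_zero]
            refine Finset.sum_congr rfl fun j hj => ?_
            have hj' : j ≤ u := Nat.lt_succ_iff.mp (Finset.mem_range.mp hj)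
            rw [if_neg (by omega)]
            have e : u + 1 - j = u - j + 1 := by omega
            rw [e]
          rw [e1, e2, ← Finset.sum_add_distrib]
          refine Finset.sum_congr rfl fun j hj => ?_
          have hj' : j ≤ u + 1 := Nat.lt_succ_iff.mp (Finset.mem_range.mp hj)
          rw [coef j hj', add_mul]
          congr 1
          · by_cases hc : j = 0
            · rw [if_pos hc, if_pos hc, zero_mul]
            · rw [if_neg hc, if_neg hc]
          · by_cases hc : j = u + 1
            · rw [if_pos hc, if_pos hc, zero_mul]
            · rw [if_neg hc, if_neg hc]
    _ = condU P 𝔲₁ 𝔲₂ (u + 1) z' :=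
          (condU_decompose P hPnn 𝔲₁ 𝔲₂ (u + 1) z').symm
end
end

section
/- Let v₁, v₂ be positive integers with v₁ ≤ v₂ and let q₁, q₂ ∈ (0,1). Define the integer intervals 𝒰₁ := [v₁q₁ − √v₁, v₁q₁ + √v₁] ∩ ℤ, 𝒰₂ := [v₂q₂ − √v₂, v₂q₂ + √v₂] ∩ ℤ, and 𝒰 := [(v₁q₁ + v₂q₂) − √v₁, (v₁q₁ + v₂q₂) + √v₁] ∩ ℤ. Then for every u ∈ 𝒰, the number of pairs (u₁, u₂) ∈ 𝒰₁ × 𝒰₂ with u₁ + u₂ = u is at least ⌊√v₁⌋ (that is, at least ⌊√v₁ ∧ √v₂⌋). -/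
open Real

/-- let `0 < v₁ ≤ v₂` and `q₁, q₂ ∈ (0,1)`, and consider the integer
intervals `𝒰₁ = [v₁q₁ - √v₁, v₁q₁ + √v₁] ∩ ℤ`, `𝒰₂ = [v₂q₂ - √v₂, v₂q₂ + √v₂] ∩ ℤ` and
`𝒰 = [(v₁q₁ + v₂q₂) - √v₁, (v₁q₁ + v₂q₂) + √v₁] ∩ ℤ`. Then for every `u ∈ 𝒰` the number
of pairs `(u₁, u₂) ∈ 𝒰₁ × 𝒰₂` with `u₁ + u₂ = u` is at least `⌊√v₁⌋ = ⌊√v₁ ∧ √v₂⌋`. -/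
theorem card_pairs_sum_in_intervals
    (v₁ v₂ : ℕ) (hv₁ : 0 < v₁) (hv : v₁ ≤ v₂) (q₁ q₂ : ℝ)
    (hq₁ : q₁ ∈ Set.Ioo (0 : ℝ) 1) (hq₂ : q₂ ∈ Set.Ioo (0 : ℝ) 1)
    (u : ℤ)
    (hu₁ : ((v₁ : ℝ) * q₁ + (v₂ : ℝ) * q₂) - Real.sqrt v₁ ≤ (u : ℝ))
    (hu₂ : (u : ℝ) ≤ ((v₁ : ℝ) * q₁ + (v₂ : ℝ) * q₂) + Real.sqrt v₁) :
    (⌊Real.sqrt v₁⌋ : ℤ) ≤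
      (((Finset.Icc ⌈(v₁ : ℝ) * q₁ - Real.sqrt v₁⌉ ⌊(v₁ : ℝ) * q₁ + Real.sqrt v₁⌋ ×ˢ
         Finset.Icc ⌈(v₂ : ℝ) * q₂ - Real.sqrt v₂⌉ ⌊(v₂ : ℝ) * q₂ + Real.sqrt v₂⌋).filter
          (fun w : ℤ × ℤ => w.1 + w.2 = u)).card : ℤ) := by
  set s₁ := Real.sqrt v₁ with hs₁def
  set s₂ := Real.sqrt v₂ with hs₂def
  set m₁ := (v₁ : ℝ) * q₁ with hm₁def
  set m₂ := (v₂ : ℝ) * q₂ with hm₂def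
  set a₁ := ⌈m₁ - s₁⌉ with ha₁def
  set b₁ := ⌊m₁ + s₁⌋ with hb₁def
  set a₂ := ⌈m₂ - s₂⌉ with ha₂def
  set b₂ := ⌊m₂ + s₂⌋ with hb₂def
  have hs1pos : (1 : ℝ) ≤ s₁ := by
    rw [hs₁def]
    rw [show (1:ℝ) = Real.sqrt 1 by simp]
    exact Real.sqrt_le_sqrt (by exact_mod_cast hv₁)
  have hs12 : s₁ ≤ s₂ := Real.sqrt_le_sqrt (by exact_mod_cast hv)
  have hfl : (⌊s₁⌋ : ℝ) ≤ s₁ := Int.floor_le s₁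
  -- floor/ceil estimates
  have hb₁l : m₁ + s₁ - 1 < (b₁ : ℝ) := Int.sub_one_lt_floor _
  have hb₁u : (b₁ : ℝ) ≤ m₁ + s₁ := Int.floor_le _
  have hb₂l : m₂ + s₂ - 1 < (b₂ : ℝ) := Int.sub_one_lt_floor _
  have hb₂u : (b₂ : ℝ) ≤ m₂ + s₂ := Int.floor_le _
  have ha₁u : (a₁ : ℝ) < m₁ - s₁ + 1 := Int.ceil_lt_add_one _
  have ha₁l : m₁ - s₁ ≤ (a₁ : ℝ) := Int.le_ceil _
  have ha₂u : (a₂ : ℝ) < m₂ - s₂ + 1 := Int.ceil_lt_add_one _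
  have ha₂l : m₂ - s₂ ≤ (a₂ : ℝ) := Int.le_ceil _
  -- the four key integer inequalities
  have cast_ineq : ∀ X : ℤ, ((⌊s₁⌋ - 2 : ℤ) : ℝ) < (X : ℝ) → ⌊s₁⌋ - 1 ≤ X := by
    intro X h
    have := Int.lt_iff_add_one_le.mp (by exact_mod_cast h : (⌊s₁⌋ - 2 : ℤ) < X)
    omega
  have h1 : ⌊s₁⌋ - 1 ≤ b₁ - a₁ := by
    apply cast_ineq; push_cast; linarith
  have h2 : ⌊s₁⌋ - 1 ≤ b₁ - (u - b₂) := by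
    apply cast_ineq; push_cast; linarith
  have h3 : ⌊s₁⌋ - 1 ≤ (u - a₂) - a₁ := by
    apply cast_ineq; push_cast; linarith
  have h4 : ⌊s₁⌋ - 1 ≤ (u - a₂) - (u - b₂) := by
    apply cast_ineq; push_cast; linarith
  set L := max a₁ (u - b₂) with hLdef
  set R := min b₁ (u - a₂) with hRdef
  have hRL : ⌊s₁⌋ - 1 ≤ R - L := by
    rcases max_cases a₁ (u - b₂) with ⟨he, hle⟩ | ⟨he, hle⟩ <;>
      rcases min_cases b₁ (u - a₂) with ⟨he2, hle2⟩ | ⟨he2, hle2⟩ <;> omega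
  -- the image of Icc L R under x ↦ (x, u - x) sits inside the filtered set
  have hinj : Set.InjOn (fun x : ℤ => (x, u - x)) (Finset.Icc L R) := by
    intro x _ y _ h
    exact (Prod.mk.injEq _ _ _ _ ▸ h).1
  have hsub : (Finset.Icc L R).image (fun x : ℤ => (x, u - x)) ⊆
      ((Finset.Icc a₁ b₁ ×ˢ Finset.Icc a₂ b₂).filter (fun w : ℤ × ℤ => w.1 + w.2 = u)) := by
    intro p hp
    simp only [Finset.mem_image, Finset.mem_Icc] at hp
    obtain ⟨x, ⟨hxL, hxR⟩, rfl⟩ := hp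
    simp only [Finset.mem_filter, Finset.mem_product, Finset.mem_Icc]
    have hL1 : a₁ ≤ L := le_max_left _ _
    have hL2 : u - b₂ ≤ L := le_max_right _ _
    have hR1 : R ≤ b₁ := min_le_left _ _
    have hR2 : R ≤ u - a₂ := min_le_right _ _
    refine ⟨⟨⟨by omega, by omega⟩, by omega, by omega⟩, by ring⟩
  have hcard := Finset.card_le_card hsub
  rw [Finset.card_image_of_injOn hinj] at hcard
  have hIcc : (Finset.Icc L R).card = (R + 1 - L).toNat := Int.card_Icc L R
  have hfl1 : 1 ≤ ⌊s₁⌋ := by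
    rw [hs₁def]; exact_mod_cast Int.le_floor.mpr (by exact_mod_cast hs1pos)
  omega
end
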